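/- ∀-fair bisimulation relations (as symmetric relations) are not closed under union: there exists a fair transition system with Streett fairness constraints and two ∀-fair bisimulation relations R₁, R₂ on it such that R₁ ∪ R₂ is not a ∀-fair bisimulation relation. -/
import Mathlib


/-- Infinite execution along the infinite trace `σ`. -/
def IsInfExec {X A : Type} (tr : X → A → X → Prop) (σ : ℕ → A) (p : ℕ → X) : Prop :=
  ∀ i, tr (p i) (σ i) (p (i + 1))

/-- `p` visits the set `S` infinitely often. -/
def InfOften {X : Type} (p : ℕ → X) (S : Set X) : Prop :=
  ∀ n, ∃ m, n ≤ m ∧ p m ∈ S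

/-- The fairness predicate `F` is given by a Streett condition: a family of
pairs `(Eᵢ, Fᵢ)` of sets of states such that an infinite execution is fair iff
for each `i`, if it visits `Eᵢ` infinitely often then it visits `Fᵢ`
infinitely often. -/
def IsStreett {X A : Type} (F : (ℕ → A) → (ℕ → X) → Prop) : Prop :=
  ∃ (I : Type) (pairs : I → Set X × Set X),
    ∀ σ p, F σ p ↔ ∀ i, InfOften p (pairs i).1 → InfOften p (pairs i).2

/-- A ∀-fair bisimulation (as a symmetric relation). -/
def AllFairBisim {X A : Type} (tr : X → A → X → Prop)
    (F : (ℕ → A) → (ℕ → X) → Prop) (R : X → X → Prop) : Prop :=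
  Symmetric R ∧
  (∀ x x' y a, tr x a x' → R x y → ∃ y', tr y a y' ∧ R x' y') ∧
  (∀ (σ : ℕ → A) (p q : ℕ → X), IsInfExec tr σ p → IsInfExec tr σ q →
    (∀ i, R (p i) (q i)) → F σ p → F σ q)

/-- Component-preserving swap `x₁↔x₂, y₁↔y₂`. -/
def tmap : Fin 4 → Fin 4 := ![2, 3, 0, 1]

/-- Component-and-letter swap `x₁↔y₂, y₁↔x₂`. -/
def smap : Fin 4 → Fin 4 := ![3, 2, 1, 0]

lemma infoften_congr {X : Type} {p q : ℕ → X} {S T : Set X}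
    (h : ∀ i, (q i ∈ T ↔ p i ∈ S)) : InfOften q T ↔ InfOften p S := by
  constructor <;> intro hi n <;> obtain ⟨m, hm, hmem⟩ := hi n <;>
    exact ⟨m, hm, by have := h m; tauto⟩

lemma infoften_map {f : Fin 4 → Fin 4} {p q : ℕ → Fin 4} (hq : ∀ i, q i = f (p i))
    (a b : Fin 4) (hab : ∀ z, f z = a ↔ z = b) :
    InfOften q {a} ↔ InfOften p {b} :=
  infoften_congr fun i => by simp [hq i, Set.mem_singleton_iff, hab]

/-- ∀-fair bisimulation relations are not closed under union:
there are a fair transition system whose fairness predicate is a Streett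
condition and ∀-fair bisimulations `R₁, R₂` on it whose union is not a ∀-fair
bisimulation. -/
theorem forall_fair_bisim_not_closed_under_union :
    ∃ (X A : Type) (tr : X → A → X → Prop)
      (F : (ℕ → A) → (ℕ → X) → Prop) (R₁ R₂ : X → X → Prop),
      IsStreett F ∧
      AllFairBisim tr F R₁ ∧ AllFairBisim tr F R₂ ∧
      ¬ AllFairBisim tr F (fun x y => R₁ x y ∨ R₂ x y) := by
  refine ⟨Fin 4, Unit, fun x _ y => (x < 2 ↔ y < 2),
    fun _ p => (InfOften p {0} ↔ InfOften p {1}) ∧ (InfOften p {2} ↔ InfOften p {3}),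
    fun x y => y = tmap x, fun x y => y = smap x, ?_, ?_, ?_, ?_⟩
  · -- Streett
    refine ⟨Fin 4, ![({0}, {1}), ({1}, {0}), ({2}, {3}), ({3}, {2})], fun σ p => ?_⟩
    constructor
    · rintro ⟨h1, h2⟩ i
      fin_cases i <;>
        simp only [Matrix.cons_val_zero, Matrix.cons_val_one, Matrix.head_cons] <;> tauto
    · intro h
      have h0 := h 0; have h1 := h 1; have h2 := h 2; have h3 := h 3
      simp only [Matrix.cons_val_zero, Matrix.cons_val_one, Matrix.head_cons,
        Matrix.cons_val_fin_one] at h0 h1 h2 h3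
      exact ⟨⟨h0, h1⟩, ⟨h2, h3⟩⟩
  · -- R₁ is a fair bisim
    refine ⟨?_, ?_, ?_⟩
    · intro x y h; subst h; revert x; decide
    · intro x x' y a htr hR; subst hR
      refine ⟨tmap x', ?_, rfl⟩
      have hc : ∀ z : Fin 4, tmap z < 2 ↔ ¬ z < 2 := by decide
      show tmap x < 2 ↔ tmap x' < 2
      rw [hc, hc]; tauto
    · intro σ p q _ _ hR hF
      have hq : ∀ i, q i = tmap (p i) := hR
      exact ⟨(infoften_map hq 0 2 (by decide)).trans
                (((infoften_map hq 1 3 (by decide)).trans hF.2.symm).symm),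
             (infoften_map hq 2 0 (by decide)).trans
                (((infoften_map hq 3 1 (by decide)).trans hF.1.symm).symm)⟩
  · -- R₂ is a fair bisim
    refine ⟨?_, ?_, ?_⟩
    · intro x y h; subst h; revert x; decide
    · intro x x' y a htr hR; subst hR
      refine ⟨smap x', ?_, rfl⟩
      have hc : ∀ z : Fin 4, smap z < 2 ↔ ¬ z < 2 := by decide
      show smap x < 2 ↔ smap x' < 2
      rw [hc, hc]; tauto
    · intro σ p q _ _ hR hF
      have hq : ∀ i, q i = smap (p i) := hR
      exact ⟨(infoften_map hq 0 3 (by decide)).trans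
                (((infoften_map hq 1 2 (by decide)).trans hF.2).symm),
             (infoften_map hq 2 1 (by decide)).trans
                (((infoften_map hq 3 0 (by decide)).trans hF.1).symm)⟩
  · -- the union is not a fair bisim
    rintro ⟨-, -, hF⟩
    set p : ℕ → Fin 4 := fun i => if i % 2 = 0 then 0 else 1 with hp
    set q : ℕ → Fin 4 := fun _ => 2 with hqdef
    have hplt : ∀ i, p i < 2 := by
      intro i; simp only [hp]; split <;> decide
    have hexp : IsInfExec (fun x (_ : Unit) y => (x < 2 ↔ y < 2)) (fun _ => ()) p :=
      fun i => by simp [hplt i, hplt (i + 1)]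
    have hexq : IsInfExec (fun x (_ : Unit) y => (x < 2 ↔ y < 2)) (fun _ => ()) q :=
      fun i => by simp [hqdef]
    have hrel : ∀ i, q i = tmap (p i) ∨ q i = smap (p i) := by
      intro i
      simp only [hp, hqdef]
      rcases Nat.even_or_odd i with h | h
      · left; rw [if_pos (Nat.even_iff.mp h)]; decide
      · right
        have h1 : i % 2 = 1 := Nat.odd_iff.mp h
        rw [if_neg (by omega)]; decide
    have hfairp : (InfOften p {0} ↔ InfOften p {1}) ∧ (InfOften p {2} ↔ InfOften p {3}) := by
      constructor
      · constructor <;> intro _ n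
        · refine ⟨2 * n + 1, by omega, ?_⟩
          show p (2 * n + 1) ∈ ({1} : Set (Fin 4))
          simp only [Set.mem_singleton_iff, hp]
          rw [if_neg (by omega)]
        · refine ⟨2 * n, by omega, ?_⟩
          show p (2 * n) ∈ ({0} : Set (Fin 4))
          simp only [Set.mem_singleton_iff, hp]
          rw [if_pos (by omega)]
      · constructor <;> intro h <;> exfalso <;> obtain ⟨m, _, hm⟩ := h 0 <;>
          have := hplt m <;> simp [Set.mem_singleton_iff] at hm <;> rw [hm] at this <;>
            exact absurd this (by decide)
    have := hF (fun _ => ()) p q hexp hexq hrel hfairp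
    obtain ⟨m, _, hm⟩ := this.2.mp (fun n => ⟨n, le_refl n, rfl⟩) 0
    have h3 : (2 : Fin 4) = 3 := hm
    exact absurd h3 (by decide)
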